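/- arXiv:2405.18048 — 6 statements merged into one kernel-verified Lean document; each statement's English description precedes it below -/
import Mathlib

section
/- Inductive property of threshold windows: Let w : ℕ → ℝ be a sequence of payoffs, θ ∈ ℝ, and let i < j be natural numbers. If ∑_{t=i}^{k-1} w(t) < θ·(k-i) for every k with i < k < j, and ∑_{t=i}^{j-1} w(t) ≥ θ·(j-i), then for every k with i ≤ k < j it holds that ∑_{t=k}^{j-1} w(t) ≥ θ·(j-k). -/
/-- Inductive property of threshold windows: if the θ-window starting at `i`
closes at `j` (every proper initial segment from `i` has mean payoff `< θ`,
while the segment from `i` to `j` has mean payoff `≥ θ`), then for every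
`i ≤ k < j` the segment from `k` to `j` has mean payoff at least `θ`. -/
theorem inductive_property_of_windows (w : ℕ → ℝ) (θ : ℝ) (i j : ℕ) (hij : i < j)
    (hopen : ∀ k, i < k → k < j → ∑ t ∈ Finset.Ico i k, w t < θ * ((k : ℝ) - (i : ℝ)))
    (hclose : ∑ t ∈ Finset.Ico i j, w t ≥ θ * ((j : ℝ) - (i : ℝ))) :
    ∀ k, i ≤ k → k < j → ∑ t ∈ Finset.Ico k j, w t ≥ θ * ((j : ℝ) - (k : ℝ)) := by
  intro k hik hkj
  rcases eq_or_lt_of_le hik with rfl | hik'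
  · exact hclose
  · have hsplit : ∑ t ∈ Finset.Ico i k, w t + ∑ t ∈ Finset.Ico k j, w t
        = ∑ t ∈ Finset.Ico i j, w t :=
      Finset.sum_Ico_consecutive _ (le_of_lt hik') (le_of_lt hkj)
    have h1 := hopen k hik' hkj
    nlinarith [h1, hclose, hsplit]
end

section
/- Window-closing bound from a uniform segment lower bound: Let w : ℕ → ℝ and B ≤ 0 be such that ∑_{t=i}^{j-1} w(t) ≥ B for all natural numbers i ≤ j. Let ε < 0 be a real number and let n ≥ 1 be a natural number with (n : ℝ) ≥ B/ε. Then for every natural number i there exists j with i < j ≤ i + n such that ∑_{t=i}^{j-1} w(t) ≥ ε·(j-i). -/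
/-- If every segment sum of `w` is bounded below by `B ≤ 0`, then for every
`ε < 0` and every `n ≥ 1` with `(n : ℝ) ≥ B / ε`, every `ε`-window closes
within `n` steps: from every position `i` there is `j` with `i < j ≤ i + n`
whose segment from `i` to `j` has mean payoff at least `ε`. -/
theorem window_closing_bound (w : ℕ → ℝ) (B : ℝ) (hB : B ≤ 0)
    (hseg : ∀ i j : ℕ, i ≤ j → ∑ t ∈ Finset.Ico i j, w t ≥ B)
    (ε : ℝ) (hε : ε < 0) (n : ℕ) (hn : 1 ≤ n) (hnB : (n : ℝ) ≥ B / ε) :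
    ∀ i : ℕ, ∃ j : ℕ, i < j ∧ j ≤ i + n ∧
      ∑ t ∈ Finset.Ico i j, w t ≥ ε * ((j : ℝ) - (i : ℝ)) := by
  intro i
  refine ⟨i + n, by omega, le_refl _, ?_⟩
  have h1 : ∑ t ∈ Finset.Ico i (i + n), w t ≥ B := hseg i (i + n) (by omega)
  have h2 : ε * (n : ℝ) ≤ B := by
    have := (div_le_iff_of_neg hε).mp hnB
    linarith
  have : ((i + n : ℕ) : ℝ) - (i : ℝ) = (n : ℝ) := by push_cast; ring
  rw [this]
  linarith
end

section
/- Walk-weight lower bound in graphs whose simple cycles are nonnegative: Let V be a finite type, E : V → V → Prop an edge relation, w : V → V → ℝ an edge-weight function, and m ≤ 0 a real number such that m ≤ w(u,v) whenever E u v. Suppose that every simple cycle has nonnegative total weight, i.e., for every list of vertices v₀, v₁, …, v_k with k ≥ 1, with E v_t v_{t+1} for all 0 ≤ t < k, with v₀, …, v_{k-1} pairwise distinct and v_k = v₀, one has ∑_{t=0}^{k-1} w(v_t, v_{t+1}) ≥ 0. Then every walk v₀, v₁, …, v_k (a list of vertices with E v_t v_{t+1} for all 0 ≤ t < k) satisfies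 ∑_{t=0}^{k-1} w(v_t, v_{t+1}) ≥ (card V)·m, where card V is the number of elements of V. -/
/-- In a finite directed graph in which every edge weight is at least `m ≤ 0`
and every simple cycle has nonnegative total weight, every walk has total
weight at least `(card V) * m`. -/
theorem walk_weight_lower_bound {V : Type*} [Fintype V]
    (E : V → V → Prop) (w : V → V → ℝ) (m : ℝ) (hm : m ≤ 0)
    (hmw : ∀ u v : V, E u v → m ≤ w u v)
    (hcyc : ∀ (v : ℕ → V) (k : ℕ), 1 ≤ k →
      (∀ t, t < k → E (v t) (v (t + 1))) →
      (∀ s t, s < k → t < k → v s = v t → s = t) →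
      v k = v 0 →
      (0 : ℝ) ≤ ∑ t ∈ Finset.range k, w (v t) (v (t + 1))) :
    ∀ (v : ℕ → V) (k : ℕ), (∀ t, t < k → E (v t) (v (t + 1))) →
      (Fintype.card V : ℝ) * m ≤ ∑ t ∈ Finset.range k, w (v t) (v (t + 1)) := by
  intro v k
  induction k using Nat.strong_induction_on generalizing v with
  | _ k ih =>
  intro hE
  by_cases hk : k ≤ Fintype.card V
  · have h1 : (k : ℝ) * m ≤ ∑ t ∈ Finset.range k, w (v t) (v (t + 1)) := by
      calc (k : ℝ) * m = ∑ _t ∈ Finset.range k, m := by simp [mul_comm]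
        _ ≤ _ := Finset.sum_le_sum fun t ht => hmw _ _ (hE t (Finset.mem_range.mp ht))
    have h2 : (Fintype.card V : ℝ) * m ≤ (k : ℝ) * m :=
      mul_le_mul_of_nonpos_right (by exact_mod_cast hk) hm
    linarith
  · push_neg at hk
    -- find a repeated vertex among the first card V + 1 vertices
    obtain ⟨a, b, hab, hvab⟩ :=
      Fintype.exists_ne_map_eq_of_card_lt (fun t : Fin (Fintype.card V + 1) => v t)
        (by simp)
    have hP : ∃ n, ∃ i, i < n ∧ v i = v n ∧ n ≤ Fintype.card V := by
      rcases lt_or_gt_of_ne hab with h | h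
      · exact ⟨b, a, Fin.lt_iff_val_lt_val.mp h, hvab, Nat.lt_succ_iff.mp b.isLt⟩
      · exact ⟨a, b, Fin.lt_iff_val_lt_val.mp h, hvab.symm, Nat.lt_succ_iff.mp a.isLt⟩
    -- minimal first-repeat index j
    classical
    set j := Nat.find hP with hj
    obtain ⟨i, hij, hvij, hjcard⟩ := Nat.find_spec hP
    have hmin : ∀ n, n < j → ¬ ∃ i, i < n ∧ v i = v n ∧ n ≤ Fintype.card V :=
      fun n hn => Nat.find_min hP hn
    have hjk : j < k := lt_of_le_of_lt hjcard hk
    set c := j - i with hc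
    have hc1 : 1 ≤ c := by omega
    have hic : i + c = j := by omega
    -- the simple cycle v i, ..., v j has nonnegative weight
    have hCpos : (0 : ℝ) ≤ ∑ t ∈ Finset.range c, w (v (i + t)) (v (i + t + 1)) := by
      have := hcyc (fun t => v (i + t)) c hc1
        (fun t ht => by
          have : E (v (i + t)) (v (i + t + 1)) := hE (i + t) (by omega)
          simpa [Nat.add_assoc] using this)
        (fun s t hs ht heq => by
          by_contra hne
          rcases Nat.lt_trichotomy s t with h | h | h
          · exact hmin (i + t) (by omega) ⟨i + s, by omega, heq, by omega⟩
          · exact hne h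
          · exact hmin (i + s) (by omega) ⟨i + t, by omega, heq.symm, by omega⟩)
        (by simp [hic, hvij.symm]; exact hvij.symm)
      simpa [Nat.add_assoc] using this
    -- the shortened walk
    set k' := k - c with hk'
    set v' := fun t => if t < i then v t else v (t + c) with hv'
    have hE' : ∀ t, t < k' → E (v' t) (v' (t + 1)) := by
      intro t ht
      by_cases h1 : t + 1 < i
      · simpa [hv', h1, show t < i from by omega] using hE t (by omega)
      · by_cases h2 : t < i
        · -- t + 1 = i
          have hti : t + 1 = i := by omega
          have : v' (t + 1) = v (t + 1) := by
            simp only [hv', if_neg (by omega : ¬ t + 1 < i)]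
            rw [show t + 1 + c = j by omega, hti, ← hvij]
          rw [this]
          simpa [hv', h2] using hE t (by omega)
        · have : E (v (t + c)) (v (t + c + 1)) := hE (t + c) (by omega)
          simpa [hv', h2, show ¬ t + 1 < i from by omega, show t + 1 + c = t + c + 1 from by omega]
            using this
    have hshort : (Fintype.card V : ℝ) * m ≤
        ∑ t ∈ Finset.range k', w (v' t) (v' (t + 1)) := ih k' (by omega) v' hE'
    -- sum decomposition
    have hsum : ∑ t ∈ Finset.range k, w (v t) (v (t + 1))
        = (∑ t ∈ Finset.range k', w (v' t) (v' (t + 1)))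
          + ∑ t ∈ Finset.range c, w (v (i + t)) (v (i + t + 1)) := by
      have e1 : ∑ t ∈ Finset.range k, w (v t) (v (t + 1))
          = ∑ t ∈ Finset.Ico 0 i, w (v t) (v (t + 1))
            + ∑ t ∈ Finset.Ico i j, w (v t) (v (t + 1))
            + ∑ t ∈ Finset.Ico j k, w (v t) (v (t + 1)) := by
        rw [Finset.sum_Ico_consecutive _ (by omega : (0:ℕ) ≤ i) (by omega : i ≤ j),
          Finset.sum_Ico_consecutive _ (by omega : (0:ℕ) ≤ j) (by omega : j ≤ k),
          Finset.range_eq_Ico]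
      have e2 : ∑ t ∈ Finset.range k', w (v' t) (v' (t + 1))
          = ∑ t ∈ Finset.Ico 0 i, w (v' t) (v' (t + 1))
            + ∑ t ∈ Finset.Ico i k', w (v' t) (v' (t + 1)) := by
        rw [Finset.sum_Ico_consecutive _ (by omega : (0:ℕ) ≤ i) (by omega : i ≤ k'),
          Finset.range_eq_Ico]
      have e3 : ∑ t ∈ Finset.Ico 0 i, w (v' t) (v' (t + 1))
          = ∑ t ∈ Finset.Ico 0 i, w (v t) (v (t + 1)) := by
        refine Finset.sum_congr rfl fun t ht => ?_
        have ht' : t < i := (Finset.mem_Ico.mp ht).2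
        by_cases h1 : t + 1 < i
        · simp [hv', h1, ht']
        · have : v' (t + 1) = v (t + 1) := by
            simp only [hv', if_neg (by omega : ¬ t + 1 < i)]
            rw [show t + 1 + c = j by omega, show t + 1 = i by omega, ← hvij]
          rw [this]; simp [hv', ht']
      have e4 : ∑ t ∈ Finset.Ico i k', w (v' t) (v' (t + 1))
          = ∑ t ∈ Finset.Ico j k, w (v t) (v (t + 1)) := by
        rw [Finset.sum_Ico_eq_sum_range, Finset.sum_Ico_eq_sum_range]
        rw [show k - j = k' - i by omega]
        refine Finset.sum_congr rfl fun t _ => ?_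
        have h1 : ¬ i + t < i := by omega
        have h2 : ¬ i + t + 1 < i := by omega
        simp only [hv', if_neg h1, if_neg h2]
        rw [show i + t + c = j + t by omega, show i + t + 1 + c = j + t + 1 by omega]
      have e5 : ∑ t ∈ Finset.Ico i j, w (v t) (v (t + 1))
          = ∑ t ∈ Finset.range c, w (v (i + t)) (v (i + t + 1)) := by
        rw [Finset.sum_Ico_eq_sum_range]
      rw [e1, e2, e3, e4, e5]; ring
    linarith
end

section
/- Leakage of structured substochastic matrices: Let m ≥ 1 and let Q be an m×m real matrix (indexed by Fin m) and 0 < δ ≤ 1 such that: (i) all entries of Q are nonnegative; (ii) every nonzero entry of Q is at least δ; (iii) for every row i, either ∑_j Q(i,j) = 1 or ∑_j Q(i,j) ≤ 1 - δ; and (iv) for every row i, either ∑_j Q(i,j) ≤ 1 - δ or there exists j < i with Q(i,j) > 0. Then every row sum of the m-th power Q^m satisfies ∑_j (Q^m)(i,j) ≤ 1 - δ^m. -/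
/-- Leakage of structured substochastic matrices: if `Q` has nonnegative
entries, every nonzero entry is at least `δ`, every row either sums to `1` or
sums to at most `1 - δ`, and every row either leaks (sums to at most `1 - δ`)
or has a positive entry in a column of strictly smaller index, then every row
sum of `Q ^ m` is at most `1 - δ ^ m`. -/
theorem substochastic_leakage (m : ℕ) (hm : 1 ≤ m)
    (Q : Matrix (Fin m) (Fin m) ℝ) (δ : ℝ) (hδ0 : 0 < δ) (hδ1 : δ ≤ 1)
    (hnonneg : ∀ i j, 0 ≤ Q i j)
    (hmin : ∀ i j, Q i j ≠ 0 → δ ≤ Q i j)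
    (hrow : ∀ i, (∑ j, Q i j = 1) ∨ (∑ j, Q i j ≤ 1 - δ))
    (hdown : ∀ i, (∑ j, Q i j ≤ 1 - δ) ∨ (∃ j, j < i ∧ 0 < Q i j)) :
    ∀ i, ∑ j, (Q ^ m) i j ≤ 1 - δ ^ m := by
  have hrow1 : ∀ i, ∑ j, Q i j ≤ 1 := by
    intro i; rcases hrow i with h | h
    · exact h.le
    · linarith
  have hpownn : ∀ n, ∀ i j : Fin m, 0 ≤ (Q ^ n) i j := by
    intro n
    induction n with
    | zero =>
      intro i j
      by_cases h : i = j <;> simp [Matrix.one_apply, h]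
    | succ n ih =>
      intro i j
      rw [pow_succ, Matrix.mul_apply]
      exact Finset.sum_nonneg fun k _ => mul_nonneg (ih i k) (hnonneg k j)
  have hkey : ∀ n, ∀ i : Fin m, ∑ j, (Q ^ (n + 1)) i j
      = ∑ k, Q i k * ∑ j, (Q ^ n) k j := by
    intro n i
    simp only [pow_succ', Matrix.mul_apply]
    rw [Finset.sum_comm]
    exact Finset.sum_congr rfl fun k _ => (Finset.mul_sum _ _ _).symm
  have hle1 : ∀ n, ∀ i : Fin m, ∑ j, (Q ^ n) i j ≤ 1 := by
    intro n
    induction n with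
    | zero => intro i; simp [Matrix.one_apply]
    | succ n ih =>
      intro i
      rw [hkey n i]
      calc ∑ k, Q i k * ∑ j, (Q ^ n) k j ≤ ∑ k, Q i k * 1 :=
            Finset.sum_le_sum fun k _ =>
              mul_le_mul_of_nonneg_left (ih k) (hnonneg i k)
        _ = ∑ k, Q i k := by simp
        _ ≤ 1 := hrow1 i
  have hδn1 : ∀ n : ℕ, δ ^ n ≤ 1 := fun n => pow_le_one₀ hδ0.le hδ1
  have hδnn : ∀ n : ℕ, 0 ≤ δ ^ n := fun n => pow_nonneg hδ0.le n
  have main : ∀ n, ∀ i : Fin m, (i : ℕ) < n → ∑ j, (Q ^ n) i j ≤ 1 - δ ^ n := by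
    intro n
    induction n with
    | zero => intro i h; exact absurd h (Nat.not_lt_zero _)
    | succ n ih =>
      intro i hi
      rw [hkey n i]
      by_cases hleak : ∑ j, Q i j ≤ 1 - δ
      · have h1 : ∑ k, Q i k * ∑ j, (Q ^ n) k j ≤ ∑ k, Q i k := by
          calc ∑ k, Q i k * ∑ j, (Q ^ n) k j ≤ ∑ k, Q i k * 1 :=
                Finset.sum_le_sum fun k _ =>
                  mul_le_mul_of_nonneg_left (hle1 n k) (hnonneg i k)
            _ = ∑ k, Q i k := by simp
        have h2 : δ ^ (n + 1) ≤ δ := by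
          calc δ ^ (n + 1) = δ * δ ^ n := by rw [pow_succ']
            _ ≤ δ * 1 := mul_le_mul_of_nonneg_left (hδn1 n) hδ0.le
            _ = δ := mul_one δ
        linarith
      · have hsum1 : ∑ j, Q i j = 1 := (hrow i).resolve_right hleak
        obtain ⟨j0, hj0lt, hj0pos⟩ := (hdown i).resolve_left hleak
        have hj0n : (j0 : ℕ) < n := by
          have := Fin.lt_iff_val_lt_val.mp hj0lt
          omega
        have hQδ : δ ≤ Q i j0 := hmin i j0 hj0pos.ne'
        have hsplit : ∑ k, Q i k * ∑ j, (Q ^ n) k j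
            = Q i j0 * (∑ j, (Q ^ n) j0 j)
              + ∑ k ∈ Finset.univ.erase j0, Q i k * ∑ j, (Q ^ n) k j :=
          (Finset.add_sum_erase _ _ (Finset.mem_univ j0)).symm
        have herase : ∑ k ∈ Finset.univ.erase j0, Q i k * ∑ j, (Q ^ n) k j
            ≤ 1 - Q i j0 := by
          have h1 : ∑ k ∈ Finset.univ.erase j0, Q i k * ∑ j, (Q ^ n) k j
              ≤ ∑ k ∈ Finset.univ.erase j0, Q i k :=
            Finset.sum_le_sum fun k _ => by
              calc Q i k * ∑ j, (Q ^ n) k j ≤ Q i k * 1 :=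
                    mul_le_mul_of_nonneg_left (hle1 n k) (hnonneg i k)
                _ = Q i k := mul_one _
          have h2 : ∑ k ∈ Finset.univ.erase j0, Q i k + Q i j0 = ∑ k, Q i k :=
            Finset.sum_erase_add _ _ (Finset.mem_univ j0)
          rw [hsum1] at h2
          linarith
        have hfirst : Q i j0 * (∑ j, (Q ^ n) j0 j) ≤ Q i j0 * (1 - δ ^ n) :=
          mul_le_mul_of_nonneg_left (ih j0 hj0n) (hnonneg i j0)
        have hpow : δ ^ (n + 1) = δ * δ ^ n := pow_succ' δ n
        rw [hsplit]
        nlinarith [hδnn n, hδn1 n]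
  intro i
  exact main m i i.isLt
end

section
/- Invertibility for structured substochastic matrices (matrix form of the paper's Proposition that I - Q_B is invertible): Let m ≥ 1 and let Q be an m×m real matrix (indexed by Fin m) and 0 < δ ≤ 1 such that: (i) all entries of Q are nonnegative; (ii) every nonzero entry of Q is at least δ; (iii) for every row i, either ∑_j Q(i,j) = 1 or ∑_j Q(i,j) ≤ 1 - δ; and (iv) for every row i, either ∑_j Q(i,j) ≤ 1 - δ or there exists j < i with Q(i,j) > 0. Then det(I - Q) ≠ 0, i.e., I - Q is invertible. -/
/-- Invertibility for structured substochastic matrices: if `Q` has nonnegative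
entries, every nonzero entry at least `δ`, every row sums to `1` or to at most
`1 - δ`, and every row either leaks or has a positive entry in a column of
strictly smaller index, then `I - Q` is invertible, i.e., `det (1 - Q) ≠ 0`. -/
theorem one_sub_substochastic_invertible (m : ℕ) (hm : 1 ≤ m)
    (Q : Matrix (Fin m) (Fin m) ℝ) (δ : ℝ) (hδ0 : 0 < δ) (hδ1 : δ ≤ 1)
    (hnonneg : ∀ i j, 0 ≤ Q i j)
    (hmin : ∀ i j, Q i j ≠ 0 → δ ≤ Q i j)
    (hrow : ∀ i, (∑ j, Q i j = 1) ∨ (∑ j, Q i j ≤ 1 - δ))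
    (hdown : ∀ i, (∑ j, Q i j ≤ 1 - δ) ∨ (∃ j, j < i ∧ 0 < Q i j)) :
    ((1 : Matrix (Fin m) (Fin m) ℝ) - Q).det ≠ 0 := by
  intro hdet
  obtain ⟨v, hv0, hv⟩ := (Matrix.exists_mulVec_eq_zero_iff).mpr hdet
  have heq : ∀ i, v i = ∑ j, Q i j * v j := by
    intro i
    have h := congrFun hv i
    simp only [Matrix.mulVec, dotProduct, Matrix.sub_apply, Matrix.one_apply,
      Pi.zero_apply, sub_mul, ite_mul, one_mul, zero_mul, Finset.sum_sub_distrib,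
      Finset.sum_ite_eq, Finset.mem_univ, if_pos, sub_eq_zero] at h
    exact h
  haveI : Nonempty (Fin m) := ⟨⟨0, hm⟩⟩
  have hne : (Finset.univ : Finset (Fin m)).Nonempty := Finset.univ_nonempty
  set M := Finset.univ.sup' hne (fun i => |v i|) with hMdef
  have hM : ∀ i, |v i| ≤ M := fun i => Finset.le_sup' (fun i => |v i|) (Finset.mem_univ i)
  have hMpos : 0 < M := by
    obtain ⟨k, hk⟩ := Function.ne_iff.mp hv0
    exact lt_of_lt_of_le (abs_pos.mpr hk) (hM k)
  obtain ⟨i1, _, hi1⟩ := Finset.exists_mem_eq_sup' hne (fun i => |v i|)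
  set S := Finset.univ.filter (fun i => |v i| = M) with hSdef
  have hSne : S.Nonempty := ⟨i1, by simp [hSdef, hi1.symm, hMdef]⟩
  set i0 := S.min' hSne with hi0def
  have hi0M : |v i0| = M := by
    have := S.min'_mem hSne
    simpa [hSdef] using this
  have hlt : ∀ j, j < i0 → |v j| < M := by
    intro j hj
    rcases lt_or_eq_of_le (hM j) with h | h
    · exact h
    · exact absurd (S.min'_le j (by simp [hSdef, h])) (not_le.mpr hj)
  -- basic bound
  have hbound : M ≤ ∑ j, Q i0 j * |v j| := by
    calc M = |v i0| := hi0M.symm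
    _ = |∑ j, Q i0 j * v j| := by rw [heq i0]
    _ ≤ ∑ j, |Q i0 j * v j| := Finset.abs_sum_le_sum_abs _ _
    _ = ∑ j, Q i0 j * |v j| := by
        refine Finset.sum_congr rfl fun j _ => ?_
        rw [abs_mul, abs_of_nonneg (hnonneg i0 j)]
  have hrowle : ∑ j, Q i0 j ≤ 1 := by
    rcases hrow i0 with h | h
    · exact le_of_eq h
    · linarith
  rcases hdown i0 with hleak | ⟨j, hj, hQ⟩
  · have : ∑ j, Q i0 j * |v j| ≤ (1 - δ) * M := by
      calc ∑ j, Q i0 j * |v j| ≤ ∑ j, Q i0 j * M :=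
        Finset.sum_le_sum fun j _ => mul_le_mul_of_nonneg_left (hM j) (hnonneg i0 j)
      _ = (∑ j, Q i0 j) * M := by rw [Finset.sum_mul]
      _ ≤ (1 - δ) * M := mul_le_mul_of_nonneg_right hleak (le_of_lt hMpos)
    nlinarith
  · have hvj : |v j| < M := hlt j hj
    have hQδ : δ ≤ Q i0 j := hmin i0 j (ne_of_gt hQ)
    have hsplit : ∑ j', Q i0 j' * |v j'| =
        Q i0 j * |v j| + ∑ j' ∈ Finset.univ.erase j, Q i0 j' * |v j'| :=
      (Finset.add_sum_erase _ _ (Finset.mem_univ j)).symm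
    have herase : ∑ j' ∈ Finset.univ.erase j, Q i0 j' * |v j'| ≤
        (∑ j', Q i0 j' - Q i0 j) * M := by
      calc ∑ j' ∈ Finset.univ.erase j, Q i0 j' * |v j'|
          ≤ ∑ j' ∈ Finset.univ.erase j, Q i0 j' * M :=
            Finset.sum_le_sum fun j' _ => mul_le_mul_of_nonneg_left (hM j') (hnonneg i0 j')
      _ = (∑ j' ∈ Finset.univ.erase j, Q i0 j') * M := by rw [Finset.sum_mul]
      _ = (∑ j', Q i0 j' - Q i0 j) * M := by
            congr 1
            have := Finset.add_sum_erase Finset.univ (fun j' => Q i0 j') (Finset.mem_univ j)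
            linarith
    nlinarith [hnonneg i0 j]
end

section
/- The fixed window mean-payoff value of a finitely-valued payoff sequence is attained: Let ℓ ≥ 1 be a natural number and let w : ℕ → ℝ be a sequence whose range is a finite set. Define S = {θ ∈ ℝ | ∃ N, ∀ i ≥ N, ∃ j with 1 ≤ j ≤ ℓ and ∑_{t=i}^{i+j-1} w(t) ≥ θ·j}. Then S is nonempty, bounded above, and its supremum belongs to S (i.e., S has a maximum element). -/
/-- The fixed window mean-payoff value of a finitely-valued payoff sequence is
attained: for a payoff sequence `w` with finite range and window length
`ℓ ≥ 1`, the set `S` of thresholds `θ` such that eventually every position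
starts a segment of length at most `ℓ` with mean payoff at least `θ` is
nonempty, bounded above, and contains its supremum. -/
theorem fwmp_value_attained (ℓ : ℕ) (hℓ : 1 ≤ ℓ) (w : ℕ → ℝ)
    (hfin : (Set.range w).Finite) :
    let S : Set ℝ := {θ : ℝ | ∃ N : ℕ, ∀ i ≥ N, ∃ j : ℕ, 1 ≤ j ∧ j ≤ ℓ ∧
      ∑ t ∈ Finset.Ico i (i + j), w t ≥ θ * (j : ℝ)}
    S.Nonempty ∧ BddAbove S ∧ sSup S ∈ S := by
  intro S
  obtain ⟨M, hM⟩ := hfin.bddAbove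
  obtain ⟨m, hm⟩ := hfin.bddBelow
  have hM' : ∀ n, w n ≤ M := fun n => hM (Set.mem_range_self n)
  have hm' : ∀ n, m ≤ w n := fun n => hm (Set.mem_range_self n)
  have hSne : S.Nonempty := by
    refine ⟨m, 0, fun i _ => ⟨1, le_rfl, hℓ, ?_⟩⟩
    simpa using hm' i
  have hSbdd : BddAbove S := by
    refine ⟨M, fun θ hθ => ?_⟩
    obtain ⟨N, hN⟩ := hθ
    obtain ⟨j, hj1, hjℓ, hsum⟩ := hN N le_rfl
    have hjpos : (0:ℝ) < j := by exact_mod_cast hj1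
    have hle : (∑ t ∈ Finset.Ico N (N + j), w t) ≤ M * j := by
      calc ∑ t ∈ Finset.Ico N (N+j), w t ≤ ∑ _t ∈ Finset.Ico N (N+j), M :=
            Finset.sum_le_sum fun t _ => hM' t
        _ = M * j := by simp [mul_comm]
    nlinarith [hsum]
  refine ⟨hSne, hSbdd, ?_⟩
  set s := sSup S with hs
  set VS : Set ℝ := {x : ℝ | ∃ i j : ℕ, 1 ≤ j ∧ j ≤ ℓ ∧
      x = (∑ t ∈ Finset.Ico i (i+j), w t) / j} with hVS
  have hVfin : VS.Finite := by
    have hsub : VS ⊆ ⋃ j ∈ Set.Icc 1 ℓ, (fun v : Fin j → ℝ => (∑ k, v k) / j) ''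
        (Set.univ.pi fun _ : Fin j => Set.range w) := by
      rintro x ⟨i, j, hj1, hjℓ, rfl⟩
      refine Set.mem_biUnion ⟨hj1, hjℓ⟩ ?_
      refine ⟨fun k => w (i + k), fun k _ => Set.mem_range_self _, ?_⟩
      rw [Finset.sum_Ico_eq_sum_range, add_tsub_cancel_left]
      exact congrArg (· / (j:ℝ)) (Fin.sum_univ_eq_sum_range (fun k => w (i+k)) j)
    exact Set.Finite.subset (Set.Finite.biUnion (Set.finite_Icc 1 ℓ) fun j _ =>
      ((Set.Finite.pi fun _ => hfin).image _)) hsub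
  have key : ∀ θ ∈ S, (∀ v ∈ VS, v < s → v < θ) → s ∈ S := by
    rintro θ ⟨N, hN⟩ hsep
    refine ⟨N, fun i hi => ?_⟩
    obtain ⟨j, hj1, hjℓ, hsum⟩ := hN i hi
    have hjpos : (0:ℝ) < j := by exact_mod_cast hj1
    have hvV : (∑ t ∈ Finset.Ico i (i+j), w t)/j ∈ VS := ⟨i, j, hj1, hjℓ, rfl⟩
    have hθv : θ ≤ (∑ t ∈ Finset.Ico i (i+j), w t)/j := (le_div_iff₀ hjpos).mpr hsum
    have hsv : s ≤ (∑ t ∈ Finset.Ico i (i+j), w t)/j := by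
      by_contra h
      push_neg at h
      exact absurd (hsep _ hvV h) (not_lt.mpr hθv)
    refine ⟨j, hj1, hjℓ, ?_⟩
    exact (le_div_iff₀ hjpos).mp hsv
  by_cases hV' : ∃ v ∈ VS, v < s
  · have hV'fin : {v ∈ VS | v < s}.Finite := hVfin.subset (Set.sep_subset _ _)
    have hV'ne : {v ∈ VS | v < s}.Nonempty := by
      obtain ⟨v, hv, hvs⟩ := hV'
      exact ⟨v, hv, hvs⟩
    have hmem := hV'ne.csSup_mem hV'fin
    have hlt : sSup {v ∈ VS | v < s} < s := hmem.2
    obtain ⟨θ, hθS, hθ⟩ := exists_lt_of_lt_csSup hSne hlt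
    exact key θ hθS fun v hv hvs =>
      lt_of_le_of_lt (le_csSup hV'fin.bddAbove ⟨hv, hvs⟩) hθ
  · push_neg at hV'
    obtain ⟨θ, hθS⟩ := hSne
    exact key θ hθS fun v hv hvs => absurd hvs (not_lt.mpr (hV' v hv))
end
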